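/- Let $(x_1,y_1),\dots,(x_n,y_n)$ be $n$ points in $\mathbb{R}^2$ and let $x_{n+1} \in \mathbb{R}$ satisfy $\min_{1\le i\le n} x_i < x_{n+1} < \max_{1\le i\le n} x_i$. Then there exists $M > 0$ such that for every $y_{n+1} \in \mathbb{R}$ with $|y_{n+1}| > M$, every pair $(\beta_0,\beta_1) \in \mathbb{R}^2$ minimizing the function $F(\beta_0,\beta_1) = \sum_{i=1}^{n+1} |y_i - \beta_0 - \beta_1 x_i|$ satisfies $\beta_0 + \beta_1 x_{n+1} \ne y_{n+1}$, i.e., the LAD regression line does not pass through the point $(x_{n+1}, y_{n+1}).$ -/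

import Mathlib

/-- If `x'` lies strictly between the min and max of the `x i`, then for
sufficiently large `|y'|`, every LAD regression line for the augmented data set
(points `(x i, y i)` together with `(x', y')`) does not pass through `(x', y')`. -/
theorem lad_line_misses_vertical_outlier
    (n : ℕ) (hn : 0 < n) (x y : Fin n → ℝ) (x' : ℝ)
    (hlo : Finset.univ.inf' (@Finset.univ_nonempty (Fin n) _ (Fin.pos_iff_nonempty.mp hn)) x < x')
    (hhi : x' < Finset.univ.sup' (@Finset.univ_nonempty (Fin n) _ (Fin.pos_iff_nonempty.mp hn)) x) :
    ∃ M > 0, ∀ y' : ℝ, M < |y'| →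
      ∀ β0 β1 : ℝ,
        (∀ b0 b1 : ℝ,
          (∑ i, |y i - β0 - β1 * x i|) + |y' - β0 - β1 * x'| ≤
            (∑ i, |y i - b0 - b1 * x i|) + |y' - b0 - b1 * x'|) →
        β0 + β1 * x' ≠ y' := by
  classical
  have hne : (Finset.univ : Finset (Fin n)).Nonempty :=
    @Finset.univ_nonempty (Fin n) _ (Fin.pos_iff_nonempty.mp hn)
  obtain ⟨j, -, hj⟩ := Finset.exists_mem_eq_inf' hne x
  obtain ⟨k, -, hk⟩ := Finset.exists_mem_eq_sup' hne x
  have hxj : x j < x' := by rw [← hj]; exact hlo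
  have hxk : x' < x k := by rw [← hk]; exact hhi
  set d1 : ℝ := x j - x' with hd1def
  set d2 : ℝ := x k - x' with hd2def
  have hd1 : d1 < 0 := by simp [hd1def]; linarith
  have hd2 : 0 < d2 := by simp [hd2def]; linarith
  have hD : 0 < d2 - d1 := by linarith
  set lam : ℝ := d2 / (d2 - d1) with hlamdef
  set mu : ℝ := -d1 / (d2 - d1) with hmudef
  have hlam : 0 < lam := div_pos hd2 hD
  have hmu : 0 < mu := div_pos (by linarith) hD
  have hsum1 : lam + mu = 1 := by
    rw [hlamdef, hmudef, ← add_div, div_eq_one_iff_eq hD.ne']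
    ring
  set θ : ℝ := min lam mu with hθdef
  have hθ : 0 < θ := lt_min hlam hmu
  set C : ℝ := (∑ i, |y i|) + |y j| + |y k| with hCdef
  have hC : 0 ≤ C := by
    have : 0 ≤ ∑ i, |y i| := Finset.sum_nonneg fun i _ => abs_nonneg _
    positivity
  refine ⟨(C + 1) / θ, by positivity, ?_⟩
  intro y' hy' β0 β1 hmin heq
  -- key two-point inequality
  have key : ∀ s c : ℝ, (1 + θ) * |c| ≤ |c + s * d1| + |c + s * d2| := by
    intro s c
    have hzero : lam * d1 + mu * d2 = 0 := by
      field_simp [hlamdef, hmudef]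
      ring
    have h1 : |c| ≤ lam * |c + s * d1| + mu * |c + s * d2| := by
      have hc : c = lam * (c + s * d1) + mu * (c + s * d2) := by
        have : lam * (c + s * d1) + mu * (c + s * d2)
            = (lam + mu) * c + s * (lam * d1 + mu * d2) := by ring
        rw [this, hsum1, hzero]; ring
      calc |c| = |lam * (c + s * d1) + mu * (c + s * d2)| := by rw [← hc]
        _ ≤ |lam * (c + s * d1)| + |mu * (c + s * d2)| := abs_add_le _ _
        _ = lam * |c + s * d1| + mu * |c + s * d2| := by
            rw [abs_mul, abs_mul, abs_of_pos hlam, abs_of_pos hmu]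
    have hA : (0:ℝ) ≤ |c + s * d1| := abs_nonneg _
    have hB : (0:ℝ) ≤ |c + s * d2| := abs_nonneg _
    have hθl : θ ≤ lam := min_le_left _ _
    have hθm : θ ≤ mu := min_le_right _ _
    nlinarith [mul_nonneg (sub_nonneg.mpr hθl) hB, mul_nonneg (sub_nonneg.mpr hθm) hA,
      mul_nonneg hθ.le hA, mul_nonneg hθ.le hB, abs_nonneg c,
      mul_le_mul_of_nonneg_left h1 hθ.le]
  have hjk : j ≠ k := by
    intro h; rw [h] at hxj; linarith
  -- lower bound on the sum via the two extreme points
  have hpair : |y j - β0 - β1 * x j| + |y k - β0 - β1 * x k| ≤ ∑ i, |y i - β0 - β1 * x i| := by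
    have hsub : ({j, k} : Finset (Fin n)) ⊆ Finset.univ := Finset.subset_univ _
    calc |y j - β0 - β1 * x j| + |y k - β0 - β1 * x k|
        = ∑ i ∈ ({j, k} : Finset (Fin n)), |y i - β0 - β1 * x i| := by rw [Finset.sum_pair hjk]
      _ ≤ ∑ i, |y i - β0 - β1 * x i| :=
          Finset.sum_le_sum_of_subset_of_nonneg hsub (fun i _ _ => abs_nonneg _)
  have hresj : |y' + β1 * d1| - |y j| ≤ |y j - β0 - β1 * x j| := by
    have h : y j - β0 - β1 * x j = y j - (y' + β1 * d1) := by
      rw [← heq]; simp [hd1def]; ring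
    rw [h, abs_sub_comm]
    exact abs_sub_abs_le_abs_sub _ _
  have hresk : |y' + β1 * d2| - |y k| ≤ |y k - β0 - β1 * x k| := by
    have h : y k - β0 - β1 * x k = y k - (y' + β1 * d2) := by
      rw [← heq]; simp [hd2def]; ring
    rw [h, abs_sub_comm]
    exact abs_sub_abs_le_abs_sub _ _
  have hkey := key β1 y'
  -- upper bound from the competitor line b0 = 0, b1 = 0
  have hupper := hmin 0 0
  simp only [mul_zero, zero_mul, sub_zero] at hupper
  have hzero : |y' - β0 - β1 * x'| = 0 := by
    rw [abs_eq_zero]; linarith [heq]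
  rw [hzero, add_zero] at hupper
  -- combine
  have hlow : (1 + θ) * |y'| - |y j| - |y k| ≤ ∑ i, |y i - β0 - β1 * x i| := by
    have : |y' + β1 * d1| + |y' + β1 * d2| - |y j| - |y k|
        ≤ ∑ i, |y i - β0 - β1 * x i| := by linarith
    linarith [key β1 y']
  have hM : C + 1 < θ * |y'| := by
    rw [div_lt_iff₀ hθ] at hy'
    linarith
  linarith
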